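/- Let K be a field, n ≥ 1, m ≥ 1, and let Z be either ℤ^m or {t ∈ ℤ^m : t ≥ t₁} for some t₁ ∈ ℤ^m. Let A_α : Z → M_n(K) for α ∈ {1,…,m} satisfy A_α(t+1_β)A_β(t) = A_β(t+1_α)A_α(t) for all t ∈ Z and all α, β. Then for every t₀ ∈ Z and every X₀ ∈ M_n(K) there exists a unique matrix function X : {t ∈ Z : t ≥ t₀} → M_n(K) satisfying X(t+1_α) = A_α(t)X(t) for all t ≥ t₀ and all α ∈ {1,…,m}, with X(t₀) = X₀. -/

import Mathlib

namespace MatrixRecAux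

variable {m n : ℕ} {K : Type*} [Field K]

/-- Cast a natural multi-index to an integer one. -/
def c {m : ℕ} (k : Fin m → ℕ) : Fin m → ℤ := fun i => (k i : ℤ)

lemma c_add_single (t₀ : Fin m → ℤ) (k : Fin m → ℕ) (α : Fin m) :
    t₀ + c (k + Pi.single α 1) = (t₀ + c k) + Pi.single α 1 := by
  funext i
  simp only [Pi.add_apply, c, Pi.single_apply]
  split_ifs <;> push_cast <;> ring

lemma c_sub_single (t₀ : Fin m → ℤ) (k : Fin m → ℕ) (β : Fin m) (h : k β ≠ 0) :
    (t₀ + c (k - Pi.single β 1)) + Pi.single β 1 = t₀ + c k := by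
  funext i
  simp only [Pi.add_apply, Pi.sub_apply, c, Pi.single_apply]
  split_ifs with hi <;> simp_all <;> omega

lemma le_add_c (t₀ : Fin m → ℤ) (k : Fin m → ℕ) : t₀ ≤ t₀ + c k := by
  intro i
  simp only [Pi.add_apply, c]
  omega

/-- The canonical solution, defined by descending along the smallest nonzero coordinate. -/
noncomputable def sol (A : Fin m → (Fin m → ℤ) → Matrix (Fin n) (Fin n) K)
    (t₀ : Fin m → ℤ) (X₀ : Matrix (Fin n) (Fin n) K) :
    (Fin m → ℕ) → Matrix (Fin n) (Fin n) K := fun k =>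
  if h : k = 0 then X₀
  else
    have hne : (Finset.univ.filter fun i => k i ≠ 0).Nonempty := by
      rcases Function.ne_iff.mp h with ⟨i, hi⟩
      exact ⟨i, by simpa using hi⟩
    let β := (Finset.univ.filter fun i => k i ≠ 0).min' hne
    have hβ : k β ≠ 0 := by
      have := (Finset.univ.filter fun i => k i ≠ 0).min'_mem hne
      simpa using this
    A β (t₀ + c (k - Pi.single β 1)) * sol A t₀ X₀ (k - Pi.single β 1)
  termination_by k => ∑ i, k i
  decreasing_by
    apply Finset.sum_lt_sum
    · intro i _; exact Nat.sub_le _ _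
    · exact ⟨β, Finset.mem_univ _, by
        simp only [Pi.sub_apply, β, Pi.single_eq_same]; exact Nat.sub_lt (Nat.pos_of_ne_zero hβ) Nat.one_pos⟩

lemma sol_zero (A : Fin m → (Fin m → ℤ) → Matrix (Fin n) (Fin n) K)
    (t₀ : Fin m → ℤ) (X₀ : Matrix (Fin n) (Fin n) K) : sol A t₀ X₀ 0 = X₀ := by
  rw [sol]; simp

lemma sol_spec (A : Fin m → (Fin m → ℤ) → Matrix (Fin n) (Fin n) K)
    (t₀ : Fin m → ℤ) (X₀ : Matrix (Fin n) (Fin n) K) (k : Fin m → ℕ) (β : Fin m)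
    (hβ : k β ≠ 0) (hmin : ∀ γ, k γ ≠ 0 → β ≤ γ) :
    sol A t₀ X₀ k = A β (t₀ + c (k - Pi.single β 1)) * sol A t₀ X₀ (k - Pi.single β 1) := by
  have h : k ≠ 0 := by
    intro h0; exact hβ (by simp [h0])
  have hne : (Finset.univ.filter fun i => k i ≠ 0).Nonempty :=
    ⟨β, by simpa using hβ⟩
  have hmm : (Finset.univ.filter fun i => k i ≠ 0).min' hne = β := by
    apply le_antisymm
    · exact Finset.min'_le _ _ (by simpa using hβ)
    · exact Finset.le_min' _ _ _ fun γ hγ => hmin γ (by simpa using hγ)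
  rw [sol, dif_neg h]
  simp only [hmm]

lemma sol_step (A : Fin m → (Fin m → ℤ) → Matrix (Fin n) (Fin n) K)
    (t₀ : Fin m → ℤ) (X₀ : Matrix (Fin n) (Fin n) K)
    (hcompat : ∀ k : Fin m → ℕ, ∀ α β : Fin m,
      A α ((t₀ + c k) + Pi.single β 1) * A β (t₀ + c k)
        = A β ((t₀ + c k) + Pi.single α 1) * A α (t₀ + c k)) :
    ∀ (N : ℕ) (k : Fin m → ℕ), ∑ i, k i = N → ∀ α : Fin m,
      sol A t₀ X₀ (k + Pi.single α 1) = A α (t₀ + c k) * sol A t₀ X₀ k := by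
  intro N
  induction N using Nat.strong_induction_on with
  | _ N IH =>
  intro k hk α
  set k1 := k + Pi.single α 1 with hk1
  have hk1α : k1 α ≠ 0 := by simp [hk1]
  have hne : (Finset.univ.filter fun i => k1 i ≠ 0).Nonempty := ⟨α, by simpa using hk1α⟩
  set β := (Finset.univ.filter fun i => k1 i ≠ 0).min' hne with hβdef
  have hβ : k1 β ≠ 0 := by
    have := (Finset.univ.filter fun i => k1 i ≠ 0).min'_mem hne
    simpa using this
  have hmin : ∀ γ, k1 γ ≠ 0 → β ≤ γ := fun γ hγ =>
    Finset.min'_le _ _ (by simpa using hγ)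
  rw [sol_spec A t₀ X₀ k1 β hβ hmin]
  by_cases hβα : β = α
  · have hsub : k1 - Pi.single β 1 = k := by
      funext i
      simp only [hk1, hβα, Pi.sub_apply, Pi.add_apply, Pi.single_apply]
      split_ifs <;> omega
    rw [hsub, hβα]
  · -- β ≠ α, so k β ≠ 0
    have hkβ : k β ≠ 0 := by
      have : k1 β = k β := by
        simp only [hk1, Pi.add_apply, Pi.single_apply, if_neg hβα, add_zero]
      rwa [this] at hβ
    set k' := k - Pi.single β 1 with hk'
    have f1 : k1 - Pi.single β 1 = k' + Pi.single α 1 := by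
      funext i
      simp only [hk1, hk', Pi.sub_apply, Pi.add_apply, Pi.single_apply]
      split_ifs with h1 h2 <;> omega
    have hsumlt : ∑ i, k' i < N := by
      rw [← hk]
      apply Finset.sum_lt_sum
      · intro i _; exact Nat.sub_le _ _
      · exact ⟨β, Finset.mem_univ _, by
          simp only [hk', Pi.sub_apply, Pi.single_eq_same]; omega⟩
    have hIH : sol A t₀ X₀ (k' + Pi.single α 1) = A α (t₀ + c k') * sol A t₀ X₀ k' :=
      IH _ hsumlt k' rfl α
    have hsolk : sol A t₀ X₀ k = A β (t₀ + c k') * sol A t₀ X₀ k' := by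
      apply sol_spec A t₀ X₀ k β hkβ
      intro γ hγ
      apply hmin
      simp only [hk1, Pi.add_apply]
      omega
    rw [f1, hIH, c_add_single, ← mul_assoc, ← hcompat k' α β, mul_assoc,
      c_sub_single t₀ k β hkβ, ← hsolk]

lemma sol_unique (A : Fin m → (Fin m → ℤ) → Matrix (Fin n) (Fin n) K)
    (t₀ : Fin m → ℤ) (X₀ : Matrix (Fin n) (Fin n) K)
    (Y : (Fin m → ℤ) → Matrix (Fin n) (Fin n) K)
    (hY0 : Y t₀ = X₀)
    (hYs : ∀ (k : Fin m → ℕ) (α : Fin m),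
      Y ((t₀ + c k) + Pi.single α 1) = A α (t₀ + c k) * Y (t₀ + c k)) :
    ∀ (N : ℕ) (k : Fin m → ℕ), ∑ i, k i = N → Y (t₀ + c k) = sol A t₀ X₀ k := by
  intro N
  induction N using Nat.strong_induction_on with
  | _ N IH =>
  intro k hk
  by_cases h : k = 0
  · subst h
    have : t₀ + c (0 : Fin m → ℕ) = t₀ := by funext i; simp [c]
    rw [this, sol_zero, hY0]
  · have hne : (Finset.univ.filter fun i => k i ≠ 0).Nonempty := by
      rcases Function.ne_iff.mp h with ⟨i, hi⟩
      exact ⟨i, by simpa using hi⟩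
    set β := (Finset.univ.filter fun i => k i ≠ 0).min' hne with hβdef
    have hβ : k β ≠ 0 := by
      have := (Finset.univ.filter fun i => k i ≠ 0).min'_mem hne
      simpa using this
    have hmin : ∀ γ, k γ ≠ 0 → β ≤ γ := fun γ hγ =>
      Finset.min'_le _ _ (by simpa using hγ)
    set k' := k - Pi.single β 1 with hk'
    have hsumlt : ∑ i, k' i < N := by
      rw [← hk]
      apply Finset.sum_lt_sum
      · intro i _; exact Nat.sub_le _ _
      · exact ⟨β, Finset.mem_univ _, by
          simp only [hk', Pi.sub_apply, Pi.single_eq_same]; omega⟩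
    rw [sol_spec A t₀ X₀ k β hβ hmin, ← IH _ hsumlt k' rfl,
      ← c_sub_single t₀ k β hβ, hYs k' β]

end MatrixRecAux

open MatrixRecAux in
/-- Proposition 3 of the paper.
If `A α (t+1_β) * A β t = A β (t+1_α) * A α t` for all `t ∈ Z` and all `α β`,
then for every `t₀ ∈ Z` and every matrix `X₀` there is a unique matrix function
on `{t ∈ Z : t₀ ≤ t}` solving `X (t + 1_α) = A α t * X t` with `X t₀ = X₀`.
Here `Z` is either `ℤ^m` or an upper set `{t : t₁ ≤ t}`. -/
theorem matrix_multitime_recurrence_existence_uniqueness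
    {m n : ℕ} (hm : 1 ≤ m) (hn : 1 ≤ n) {K : Type*} [Field K]
    (Z : Set (Fin m → ℤ))
    (hZ : Z = Set.univ ∨ ∃ t₁ : Fin m → ℤ, Z = {t | t₁ ≤ t})
    (A : Fin m → (Fin m → ℤ) → Matrix (Fin n) (Fin n) K)
    (hcompat : ∀ t ∈ Z, ∀ α β : Fin m,
      A α (t + Pi.single β 1) * A β t = A β (t + Pi.single α 1) * A α t) :
    ∀ t₀ ∈ Z, ∀ X₀ : Matrix (Fin n) (Fin n) K,
      ∃ X : (Fin m → ℤ) → Matrix (Fin n) (Fin n) K,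
        (X t₀ = X₀ ∧
          ∀ t ∈ Z, t₀ ≤ t → ∀ α : Fin m,
            X (t + Pi.single α 1) = A α t * X t) ∧
        ∀ Y : (Fin m → ℤ) → Matrix (Fin n) (Fin n) K,
          (Y t₀ = X₀ ∧
            ∀ t ∈ Z, t₀ ≤ t → ∀ α : Fin m,
              Y (t + Pi.single α 1) = A α t * Y t) →
          ∀ t ∈ Z, t₀ ≤ t → Y t = X t := by
  intro t₀ ht₀ X₀
  have hZmem : ∀ s : Fin m → ℤ, t₀ ≤ s → s ∈ Z := by
    rcases hZ with h | ⟨t₁, h⟩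
    · intro s _; simp [h]
    · intro s hs
      rw [h] at ht₀ ⊢
      exact le_trans ht₀ hs
  have hcompat' : ∀ k : Fin m → ℕ, ∀ α β : Fin m,
      A α ((t₀ + c k) + Pi.single β 1) * A β (t₀ + c k)
        = A β ((t₀ + c k) + Pi.single α 1) * A α (t₀ + c k) := fun k α β =>
    hcompat (t₀ + c k) (hZmem _ (le_add_c t₀ k)) α β
  refine ⟨fun t => sol A t₀ X₀ (fun i => (t i - t₀ i).toNat), ⟨?_, ?_⟩, ?_⟩
  · show sol A t₀ X₀ (fun i => (t₀ i - t₀ i).toNat) = X₀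
    have h0 : (fun i => (t₀ i - t₀ i).toNat) = (0 : Fin m → ℕ) := by funext i; simp
    rw [h0, sol_zero]
  · intro t htZ htle α
    have ht : t₀ + c (fun i => (t i - t₀ i).toNat) = t := by
      funext i; have h1 : t₀ i ≤ t i := htle i
      simp only [Pi.add_apply, c]; omega
    have hk1 : (fun i => (((t + Pi.single α 1 : Fin m → ℤ)) i - t₀ i).toNat)
        = (fun i => (t i - t₀ i).toNat) + Pi.single α 1 := by
      funext i
      have h1 : t₀ i ≤ t i := htle i
      simp only [Pi.add_apply, Pi.single_apply]
      split_ifs <;> omega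
    simp only [hk1]
    rw [sol_step A t₀ X₀ hcompat' _ _ rfl α, ht]
  · rintro Y ⟨hY0, hYs⟩ t htZ htle
    have hYs' : ∀ (k : Fin m → ℕ) (α : Fin m),
        Y ((t₀ + c k) + Pi.single α 1) = A α (t₀ + c k) * Y (t₀ + c k) := fun k α =>
      hYs (t₀ + c k) (hZmem _ (le_add_c t₀ k)) (le_add_c t₀ k) α
    have ht : t₀ + c (fun i => (t i - t₀ i).toNat) = t := by
      funext i; have h1 : t₀ i ≤ t i := htle i
      simp only [Pi.add_apply, c]; omega
    calc Y t = Y (t₀ + c (fun i => (t i - t₀ i).toNat)) := by rw [ht]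
    _ = sol A t₀ X₀ (fun i => (t i - t₀ i).toNat) := sol_unique A t₀ X₀ Y hY0 hYs' _ _ rfl
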